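/- Graphical formula for stationary dissipated power: for an irreducible Markov jump process on a finite connected graph with rates k and antisymmetric edge function q, the stationary average ⟨P⟩ = Σ_x ρ(x) Σ_y k(x,y) q(x,y) equals (1/W) Σ_{H̄ ∈ O(ℋ)} w(H̄) q(ℓ̄), where O(ℋ) is the set of all oriented spanning tree-loops of the graph, ℓ̄ is the oriented loop of H̄, q(ℓ̄) is the sum of q over the directed edges of ℓ̄, w(H̄) is the product of rates over all directed edges of H̄, and W is the total weight of rooted spanning trees. -/
import Mathlib


open Finset
open scoped Classical

variable {V : Type*} [Fintype V] [DecidableEq V]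

/-- `p` encodes a spanning tree of `G` rooted at `r`, oriented toward the root. -/
def IsRootedTree (G : SimpleGraph V) (r : V) (p : V → V) : Prop :=
  p r = r ∧ (∀ v, v ≠ r → G.Adj v (p v)) ∧ ∀ v, ∃ n, p^[n] v = r

/-- Weight of a parent-map encoded oriented subgraph. -/
noncomputable def wt (k : V → V → ℝ) (p : V → V) : ℝ :=
  ∏ v ∈ Finset.univ.filter (fun v => p v ≠ v), k v (p v)

/-- Kirchhoff weight of a state. -/
noncomputable def treeSum (G : SimpleGraph V) (k : V → V → ℝ) (x : V) : ℝ :=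
  ∑ p ∈ Finset.univ.filter (fun p : V → V => IsRootedTree G x p), wt k p

/-- Total weight of all rooted spanning trees of `G`. -/
noncomputable def W (G : SimpleGraph V) (k : V → V → ℝ) : ℝ :=
  ∑ x, treeSum G k x

/-- `v` is a periodic point of `p` with positive period. -/
def IsPer (p : V → V) (v : V) : Prop := ∃ n, 0 < n ∧ p^[n] v = v

/-- `p` encodes an oriented spanning tree-loop of `G`: every vertex has one outgoing edge
of `G` (so every vertex flows into a cycle, the trees being directed toward the loop), and
there is a single cycle (all periodic points lie on one orbit). -/
def IsSpanningTreeLoop (G : SimpleGraph V) (p : V → V) : Prop :=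
  (∀ v, G.Adj v (p v)) ∧
  ∀ u v, IsPer p u → IsPer p v → ∃ m, p^[m] u = v

/-- `q(ℓ̄)`: sum of `q` over the directed edges of the oriented loop of `p`. -/
noncomputable def qLoop (q : V → V → ℝ) (p : V → V) : ℝ :=
  ∑ v ∈ Finset.univ.filter (fun v => IsPer p v), q v (p v)

/-- `w(H̄)`: product of the rates over all directed edges of an oriented spanning
tree-loop. -/
noncomputable def wAll (k : V → V → ℝ) (p : V → V) : ℝ :=
  ∏ v, k v (p v)

/- ### Auxiliary lemmas -/

lemma iterate_congr {p p' : V → V} {x : V} (h : ∀ v, v ≠ x → p' v = p v)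
    {u : V} {n : ℕ} (hn : ∀ j < n, p^[j] u ≠ x) : p'^[n] u = p^[n] u := by
  induction n with
  | zero => rfl
  | succ n ih =>
    rw [Function.iterate_succ_apply', Function.iterate_succ_apply',
      ih (fun j hj => hn j (Nat.lt_succ_of_lt hj))]
    exact h _ (hn n (Nat.lt_succ_self n))

lemma reach_min {p : V → V} {u x : V} (h : ∃ n, p^[n] u = x) :
    ∃ n, p^[n] u = x ∧ ∀ j < n, p^[j] u ≠ x :=
  ⟨Nat.find h, Nat.find_spec h, fun j hj => Nat.find_min h hj⟩

lemma exists_per_on_orbit (p : V → V) (u : V) : ∃ n, IsPer p (p^[n] u) := by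
  obtain ⟨a, b, hab, heq⟩ := Fintype.exists_ne_map_eq_of_card_lt
    (fun n : Fin (Fintype.card V + 1) => p^[(n : ℕ)] u) (by simp)
  have hab' : (a : ℕ) ≠ (b : ℕ) := fun h => hab (Fin.ext h)
  rcases Nat.lt_or_ge (a : ℕ) (b : ℕ) with h | h
  · refine ⟨a, b - a, by omega, ?_⟩
    rw [← Function.iterate_add_apply, Nat.sub_add_cancel h.le]
    exact heq.symm
  · have h' : (b : ℕ) < a := lt_of_le_of_ne h (Ne.symm hab')
    refine ⟨b, a - b, by omega, ?_⟩
    rw [← Function.iterate_add_apply, Nat.sub_add_cancel h'.le]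
    exact heq

lemma isSTL_update {G : SimpleGraph V} {x y : V} {p : V → V}
    (hxy : G.Adj x y) (hp : IsRootedTree G x p) :
    IsSpanningTreeLoop G (Function.update p x y) ∧ IsPer (Function.update p x y) x := by
  obtain ⟨hroot, hadj, hreach⟩ := hp
  set p' := Function.update p x y with hp'
  have hpx : p' x = y := Function.update_self x y p
  have hlocal : ∀ v, v ≠ x → p' v = p v := fun v hv => Function.update_of_ne hv _ _
  have hreach' : ∀ u, ∃ n, p'^[n] u = x := by
    intro u
    obtain ⟨n, hn, hmin⟩ := reach_min (hreach u)
    exact ⟨n, by rw [iterate_congr hlocal hmin]; exact hn⟩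
  have hadj' : ∀ v, G.Adj v (p' v) := by
    intro v
    by_cases hv : v = x
    · subst hv; rw [hpx]; exact hxy
    · rw [hlocal v hv]; exact hadj v hv
  have hperx : IsPer p' x := by
    obtain ⟨n, hn⟩ := hreach' y
    exact ⟨n + 1, Nat.succ_pos n, by rw [Function.iterate_succ_apply, hpx, hn]⟩
  refine ⟨⟨hadj', ?_⟩, hperx⟩
  intro u v _ hv
  obtain ⟨b, hb⟩ := hreach' u
  obtain ⟨a, ha⟩ := hreach' v
  obtain ⟨d, hd0, hd⟩ := hv
  have hmul : ∀ t, p'^[t * d] v = v := by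
    intro t; induction t with
    | zero => simp
    | succ t ih => rw [Nat.succ_mul, Function.iterate_add_apply, hd, ih]
  have hax : a ≤ a * d := Nat.le_mul_of_pos_right a hd0
  have hx2v : p'^[a * d - a] x = v := by
    rw [← ha, ← Function.iterate_add_apply, Nat.sub_add_cancel hax, hmul a]
  exact ⟨(a * d - a) + b, by rw [Function.iterate_add_apply, hb, hx2v]⟩

lemma isTree_update {G : SimpleGraph V} {v : V} {p' : V → V}
    (hp' : IsSpanningTreeLoop G p') (hv : IsPer p' v) :
    G.Adj v (p' v) ∧ IsRootedTree G v (Function.update p' v v) := by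
  obtain ⟨hadj, hcyc⟩ := hp'
  refine ⟨hadj v, Function.update_self v v p', fun u hu => ?_, fun u => ?_⟩
  · rw [Function.update_of_ne hu]; exact hadj u
  · have hreach : ∃ N, p'^[N] u = v := by
      obtain ⟨n, hper⟩ := exists_per_on_orbit p' u
      obtain ⟨m, hm⟩ := hcyc _ v hper hv
      exact ⟨m + n, by rw [Function.iterate_add_apply]; exact hm⟩
    obtain ⟨N, hN, hmin⟩ := reach_min hreach
    refine ⟨N, ?_⟩
    have hlocal : ∀ w, w ≠ v → Function.update p' v v w = p' w :=
      fun w hw => Function.update_of_ne hw _ _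
    rw [iterate_congr hlocal hmin]
    exact hN

lemma wAll_update {k : V → V → ℝ} {G : SimpleGraph V} {x y : V} {p : V → V}
    (hp : IsRootedTree G x p) :
    wAll k (Function.update p x y) = k x y * wt k p := by
  have hfilter : Finset.univ.filter (fun v => p v ≠ v) = Finset.univ.erase x := by
    ext v
    simp only [Finset.mem_filter, Finset.mem_univ, true_and, Finset.mem_erase, and_true]
    constructor
    · intro h hvx; exact h (hvx ▸ hp.1)
    · intro hvx h; exact (G.ne_of_adj (hp.2.1 v hvx)) h.symm
  rw [wAll, wt, hfilter, ← Finset.mul_prod_erase _ _ (Finset.mem_univ x),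
    Function.update_self]
  congr 1
  exact Finset.prod_congr rfl fun v hv =>
    by rw [Function.update_of_ne (Finset.ne_of_mem_erase hv)]

/-- graphical formula for the stationary dissipated power:
`⟨P⟩ = (1/W) Σ_{H̄ ∈ O(ℋ)} w(H̄) q(ℓ̄)`. -/
theorem stmt9 (G : SimpleGraph V) (hG : G.Connected)
    (k : V → V → ℝ)
    (hk : ∀ a b, 0 < k a b ↔ G.Adj a b)
    (hk0 : ∀ a b, ¬ G.Adj a b → k a b = 0)
    (q : V → V → ℝ) (hqa : ∀ a b, q a b = - q b a)
    (ρ : V → ℝ) (hρ : ∀ a, ρ a = treeSum G k a / W G k) :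
    ∑ x, ρ x * ∑ y, k x y * q x y
      = (W G k)⁻¹ *
        ∑ p ∈ Finset.univ.filter (fun p : V → V => IsSpanningTreeLoop G p),
          wAll k p * qLoop q p := by
  have step2 :
      (∑ x, treeSum G k x * ∑ y, k x y * q x y)
        = ∑ p ∈ Finset.univ.filter (fun p : V → V => IsSpanningTreeLoop G p),
            wAll k p * qLoop q p := by
    have hL : (∑ x, treeSum G k x * ∑ y, k x y * q x y)
        = ∑ t ∈ Finset.univ.filter
            (fun t : (V × V) × (V → V) => G.Adj t.1.1 t.1.2 ∧ IsRootedTree G t.1.1 t.2),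
            wt k t.2 * (k t.1.1 t.1.2 * q t.1.1 t.1.2) := by
      rw [Finset.sum_filter, Fintype.sum_prod_type, Fintype.sum_prod_type]
      refine Finset.sum_congr rfl fun x _ => ?_
      calc treeSum G k x * ∑ y, k x y * q x y
          = ∑ p : V → V, (if IsRootedTree G x p then wt k p else 0)
              * ∑ y, k x y * q x y := by
            rw [treeSum, Finset.sum_filter, Finset.sum_mul]
        _ = ∑ p : V → V, ∑ y,
              (if IsRootedTree G x p then wt k p * (k x y * q x y) else 0) := by
            refine Finset.sum_congr rfl fun p _ => ?_
            split_ifs with h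
            · rw [Finset.mul_sum]
            · simp
        _ = ∑ y, ∑ p : V → V,
              (if G.Adj x y ∧ IsRootedTree G x p
                then wt k p * (k x y * q x y) else 0) := by
            rw [Finset.sum_comm]
            refine Finset.sum_congr rfl fun y _ => Finset.sum_congr rfl fun p _ => ?_
            by_cases hA : G.Adj x y <;> by_cases hT : IsRootedTree G x p <;>
              simp [hA, hT, hk0 x y]
    have hR : (∑ p ∈ Finset.univ.filter (fun p : V → V => IsSpanningTreeLoop G p),
            wAll k p * qLoop q p)
        = ∑ s ∈ Finset.univ.filter
            (fun s : (V → V) × V => IsSpanningTreeLoop G s.1 ∧ IsPer s.1 s.2),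
            wAll k s.1 * q s.2 (s.1 s.2) := by
      rw [Finset.sum_filter, Finset.sum_filter, Fintype.sum_prod_type]
      refine Finset.sum_congr rfl fun p _ => ?_
      split_ifs with h
      · rw [qLoop, Finset.sum_filter, Finset.mul_sum]
        refine Finset.sum_congr rfl fun v _ => ?_
        by_cases hv : IsPer p v <;> simp [hv, h]
      · simp [h]
    rw [hL, hR]
    refine Finset.sum_nbij'
      (fun t => (Function.update t.2 t.1.1 t.1.2, t.1.1))
      (fun s => ((s.2, s.1 s.2), Function.update s.1 s.2 s.2)) ?_ ?_ ?_ ?_ ?_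
    · intro t ht
      simp only [Finset.mem_filter, Finset.mem_univ, true_and] at ht ⊢
      exact isSTL_update ht.1 ht.2
    · intro s hs
      simp only [Finset.mem_filter, Finset.mem_univ, true_and] at hs ⊢
      exact isTree_update hs.1 hs.2
    · intro t ht
      simp only [Finset.mem_filter, Finset.mem_univ, true_and] at ht
      have h1 : Function.update t.2 t.1.1 t.1.2 t.1.1 = t.1.2 :=
        Function.update_self _ _ _
      have h2 : Function.update (Function.update t.2 t.1.1 t.1.2) t.1.1 t.1.1 = t.2 := by
        rw [Function.update_idem, Function.update_eq_self_iff]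
        exact ht.2.1.symm
      simp [h1, h2]
    · intro s hs
      simp only [Finset.mem_filter, Finset.mem_univ, true_and] at hs
      have h2 : Function.update (Function.update s.1 s.2 s.2) s.2 (s.1 s.2) = s.1 := by
        rw [Function.update_idem]
        exact Function.update_eq_self s.2 s.1
      simp [h2]
    · intro t ht
      simp only [Finset.mem_filter, Finset.mem_univ, true_and] at ht
      dsimp only
      rw [wAll_update ht.2, Function.update_self]
      ring
  rw [← step2, Finset.mul_sum]
  refine Finset.sum_congr rfl fun x _ => ?_
  rw [hρ x, div_eq_mul_inv]
  ring
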